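/- Conversely, if an open set U ⊆ ℝⁿ satisfies uniform interior and exterior cone conditions near a boundary point x (there exist δ > 0 and an open cone C̊ with axis k such that for all z ∈ ∂U ∩ B(x,δ), (z − C̊) ∩ B(x,δ) ⊆ U and (z + C̊) ∩ B(x,δ) ⊆ ℝⁿ \ closure(U)), then ∂U is locally the graph of a Lipschitz function: there exist δ' > 0 and a Lipschitz function f: k⊥ → ℝ such that for y ∈ B(x, δ'), y ∈ U iff k·(y−x) < f(P_k(y−x)), where P_k is orthogonal projection onto k⊥. -/

import Mathlib

open Set Topology

/-- Append a last coordinate to a vector of `ℝⁿ`, giving a vector of `ℝⁿ⁺¹`. -/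
noncomputable def snocE {n : ℕ} (v : EuclideanSpace ℝ (Fin n)) (a : ℝ) :
    EuclideanSpace ℝ (Fin (n + 1)) :=
  WithLp.toLp 2 (Fin.snoc (fun j => v j) a : Fin (n + 1) → ℝ)

/-- Projection of `ℝⁿ⁺¹` onto the first `n` coordinates. -/
noncomputable def projE {n : ℕ} (y : EuclideanSpace ℝ (Fin (n + 1))) :
    EuclideanSpace ℝ (Fin n) :=
  WithLp.toLp 2 (fun i : Fin n => y i.castSucc)

/-- The open cone `C̊ = ℝ_{>0} · (B_{ℝⁿ}(0,1) × {K})` with axis the last coordinate. -/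
def coneSet (n : ℕ) (K : ℝ) : Set (EuclideanSpace ℝ (Fin (n + 1))) :=
  {c | ∃ t : ℝ, 0 < t ∧ ∃ v : EuclideanSpace ℝ (Fin n), ‖v‖ < 1 ∧ c = t • snocE v K}

namespace ConesAux

variable {n : ℕ}

@[simp] lemma snocE_last (v : EuclideanSpace ℝ (Fin n)) (a : ℝ) :
    snocE v a (Fin.last n) = a := by
  simp [snocE]

@[simp] lemma snocE_castSucc (v : EuclideanSpace ℝ (Fin n)) (a : ℝ) (i : Fin n) :
    snocE v a i.castSucc = v i := by
  simp [snocE]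

@[simp] lemma projE_apply (y : EuclideanSpace ℝ (Fin (n + 1))) (i : Fin n) :
    projE y i = y i.castSucc := rfl

lemma snocE_projE (y : EuclideanSpace ℝ (Fin (n + 1))) :
    snocE (projE y) (y (Fin.last n)) = y := by
  ext i
  refine Fin.lastCases ?_ (fun j => ?_) i <;> simp

lemma snocE_add (v w : EuclideanSpace ℝ (Fin n)) (a b : ℝ) :
    snocE v a + snocE w b = snocE (v + w) (a + b) := by
  ext i
  refine Fin.lastCases ?_ (fun j => ?_) i <;> simp [PiLp.add_apply]

lemma snocE_sub (v w : EuclideanSpace ℝ (Fin n)) (a b : ℝ) :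
    snocE v a - snocE w b = snocE (v - w) (a - b) := by
  ext i
  refine Fin.lastCases ?_ (fun j => ?_) i <;> simp [PiLp.sub_apply]

lemma snocE_smul (t : ℝ) (v : EuclideanSpace ℝ (Fin n)) (a : ℝ) :
    t • snocE v a = snocE (t • v) (t * a) := by
  ext i
  refine Fin.lastCases ?_ (fun j => ?_) i <;> simp [PiLp.smul_apply, smul_eq_mul]

lemma snocE_neg (v : EuclideanSpace ℝ (Fin n)) (a : ℝ) :
    -snocE v a = snocE (-v) (-a) := by
  ext i
  refine Fin.lastCases ?_ (fun j => ?_) i <;> simp [PiLp.neg_apply]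

@[simp] lemma snocE_zero : snocE (0 : EuclideanSpace ℝ (Fin n)) 0 = 0 := by
  ext i
  refine Fin.lastCases ?_ (fun j => ?_) i <;> simp [PiLp.zero_apply]

lemma norm_snocE_sq (v : EuclideanSpace ℝ (Fin n)) (a : ℝ) :
    ‖snocE v a‖ ^ 2 = ‖v‖ ^ 2 + a ^ 2 := by
  rw [EuclideanSpace.norm_eq, EuclideanSpace.norm_eq,
    Real.sq_sqrt (by positivity), Real.sq_sqrt (by positivity),
    Fin.sum_univ_castSucc]
  simp

lemma norm_snocE_le (v : EuclideanSpace ℝ (Fin n)) (a : ℝ) :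
    ‖snocE v a‖ ≤ ‖v‖ + |a| := by
  have h1 := norm_snocE_sq v a
  nlinarith [norm_nonneg (snocE v a), norm_nonneg v, abs_nonneg a, sq_abs a,
    mul_nonneg (norm_nonneg v) (abs_nonneg a)]

lemma norm_projE_le (y : EuclideanSpace ℝ (Fin (n + 1))) : ‖projE y‖ ≤ ‖y‖ := by
  have h1 := norm_snocE_sq (projE y) (y (Fin.last n))
  rw [snocE_projE] at h1
  nlinarith [norm_nonneg (projE y), norm_nonneg y, sq_nonneg (y (Fin.last n))]

lemma abs_last_le (y : EuclideanSpace ℝ (Fin (n + 1))) : |y (Fin.last n)| ≤ ‖y‖ := by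
  have h1 := norm_snocE_sq (projE y) (y (Fin.last n))
  rw [snocE_projE] at h1
  nlinarith [norm_nonneg y, abs_nonneg (y (Fin.last n)), sq_abs (y (Fin.last n)),
    sq_nonneg (‖projE y‖)]

lemma mem_coneSet_iff {K : ℝ} (hK : 0 < K) {c : EuclideanSpace ℝ (Fin (n + 1))} :
    c ∈ coneSet n K ↔ K * ‖projE c‖ < c (Fin.last n) := by
  constructor
  · rintro ⟨t, ht, v, hv, rfl⟩
    have h1 : (t • snocE v K) (Fin.last n) = t * K := by
      simp [PiLp.smul_apply, smul_eq_mul]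
    have h2 : projE (t • snocE v K) = t • v := by
      ext i; simp [PiLp.smul_apply, smul_eq_mul]
    rw [h1, h2, norm_smul, Real.norm_eq_abs, abs_of_pos ht]
    nlinarith [mul_pos ht hK, norm_nonneg v]
  · intro hlt
    have ha : 0 < c (Fin.last n) :=
      lt_of_le_of_lt (by positivity) hlt
    refine ⟨c (Fin.last n) / K, by positivity,
      (K / c (Fin.last n)) • projE c, ?_, ?_⟩
    · rw [norm_smul, Real.norm_eq_abs, abs_of_pos (by positivity)]
      rw [div_mul_eq_mul_div, div_lt_one ha]
      exact hlt
    · rw [snocE_smul, smul_smul, div_mul_div_comm, mul_comm (c (Fin.last n)) K,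
        div_self (by positivity), one_smul, div_mul_cancel₀ _ (ne_of_gt hK),
        snocE_projE]

lemma vertical_mem_coneSet {K : ℝ} (hK : 0 < K) {s : ℝ} (hs : 0 < s) :
    snocE (0 : EuclideanSpace ℝ (Fin n)) s ∈ coneSet n K := by
  rw [mem_coneSet_iff hK]
  have : projE (snocE (0 : EuclideanSpace ℝ (Fin n)) s) = 0 := by
    ext i; simp
  rw [this, snocE_last, norm_zero, mul_zero]
  exact hs

end ConesAux

open ConesAux

/-- Conversely, uniform interior and exterior cone conditions near a boundary point `x`
imply that `∂U` is locally the graph of a Lipschitz function: for suitable `δ' > 0` and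
Lipschitz `f`, for `y ∈ B(x,δ')` one has `y ∈ U ↔ (y−x)ⁿ < f(P(y−x))` (axis `k` taken to be
the last coordinate direction). -/
theorem proper_cones_imply_lipschitz_graph {n : ℕ}
    (U : Set (EuclideanSpace ℝ (Fin (n + 1)))) (hU : IsOpen U)
    (x : EuclideanSpace ℝ (Fin (n + 1))) (hx : x ∈ frontier U)
    (δ K : ℝ) (hδ : 0 < δ) (hK : 0 < K)
    (hcone : ∀ z ∈ frontier U ∩ Metric.ball x δ,
      ((fun c => z - c) '' coneSet n K) ∩ Metric.ball x δ ⊆ U ∧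
      ((fun c => z + c) '' coneSet n K) ∩ Metric.ball x δ ⊆ (closure U)ᶜ) :
    ∃ δ' : ℝ, 0 < δ' ∧ ∃ (L : NNReal) (f : EuclideanSpace ℝ (Fin n) → ℝ),
      LipschitzWith L f ∧ f 0 = 0 ∧
      ∀ y : EuclideanSpace ℝ (Fin (n + 1)), dist y x < δ' →
        (y ∈ U ↔ y (Fin.last n) - x (Fin.last n) < f (projE (y - x))) := by
  set r : ℝ := δ / (2 * (1 + 2 * K)) with hr_def
  have hr : 0 < r := by positivity
  set h : ℝ := 2 * K * r with hh_def
  have hh : 0 < h := by positivity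
  have hrδ : r * (2 * (1 + 2 * K)) = δ := by
    rw [hr_def]; field_simp
  have hrsmall : r + h < δ := by nlinarith
  have hrδ' : r < δ := by nlinarith
  -- bound: points on short vertical segments stay in the δ-ball
  have hball : ∀ (w : EuclideanSpace ℝ (Fin n)) (t : ℝ), ‖w‖ < r → |t| ≤ h →
      x + snocE w t ∈ Metric.ball x δ := by
    intro w t hw ht
    rw [Metric.mem_ball, dist_eq_norm, add_sub_cancel_left]
    calc ‖snocE w t‖ ≤ ‖w‖ + |t| := norm_snocE_le w t
      _ < r + h := by linarith [lt_of_le_of_lt (le_refl |t|) (lt_of_le_of_lt ht (lt_add_of_pos_left h hr))]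
      _ < δ := hrsmall
  -- frontier separation
  have hsep : ∀ z ∈ frontier U ∩ Metric.ball x δ, ∀ z' ∈ frontier U ∩ Metric.ball x δ,
      z' (Fin.last n) - z (Fin.last n) ≤ K * ‖projE (z' - z)‖ := by
    intro z hz z' hz'
    by_contra hlt
    push_neg at hlt
    have hc : z' - z ∈ coneSet n K := by
      rw [mem_coneSet_iff hK, PiLp.sub_apply]
      exact hlt
    have hmem : z' ∈ ((fun c => z + c) '' coneSet n K) ∩ Metric.ball x δ :=
      ⟨⟨z' - z, hc, by simp⟩, hz'.2⟩
    exact (hcone z hz).2 hmem (frontier_subset_closure hz'.1)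
  -- continuity of the vertical line maps
  have hγcont : ∀ w : EuclideanSpace ℝ (Fin n), Continuous fun t : ℝ => x + snocE w t := by
    intro w
    have heq : (fun t : ℝ => x + snocE w t)
        = fun t : ℝ => (x + snocE w 0) + t • snocE 0 1 := by
      funext t
      rw [snocE_smul, smul_zero, mul_one, add_assoc, snocE_add, add_zero, zero_add]
    rw [heq]
    exact continuous_const.add (continuous_id.smul continuous_const)
  set f₀ : EuclideanSpace ℝ (Fin n) → ℝ :=
    fun w => sSup (Icc (-h) h ∩ {t : ℝ | x + snocE w t ∈ closure U}) with hf₀_def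
  have key : ∀ w : EuclideanSpace ℝ (Fin n), ‖w‖ < r →
      x + snocE w (f₀ w) ∈ frontier U ∩ Metric.ball x δ ∧ f₀ w ∈ Icc (-h) h ∧
      (∀ t : ℝ, t < f₀ w → x + snocE w t ∈ Metric.ball x δ → x + snocE w t ∈ U) ∧
      (∀ t : ℝ, f₀ w < t → x + snocE w t ∈ Metric.ball x δ → x + snocE w t ∉ closure U) := by
    intro w hw
    set A : Set ℝ := Icc (-h) h ∩ {t : ℝ | x + snocE w t ∈ closure U} with hA_def
    have hbot : x + snocE w (-h) ∈ U := by
      have hc : snocE (-w) h ∈ coneSet n K := by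
        rw [mem_coneSet_iff hK]
        have h1 : projE (snocE (-w) h) = -w := by ext i; simp
        rw [h1, snocE_last, norm_neg]
        nlinarith [mul_pos hK hr]
      refine (hcone x ⟨hx, Metric.mem_ball_self hδ⟩).1 ⟨⟨snocE (-w) h, hc, ?_⟩, ?_⟩
      · show x - snocE (-w) h = x + snocE w (-h)
        rw [sub_eq_add_neg, snocE_neg, neg_neg]
      · exact hball w (-h) hw (by rw [abs_neg, abs_of_pos hh])
    have htop : x + snocE w h ∉ closure U := by
      have hc : snocE w h ∈ coneSet n K := by
        rw [mem_coneSet_iff hK]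
        have h1 : projE (snocE w h) = w := by ext i; simp
        rw [h1, snocE_last]
        nlinarith [mul_pos hK hr]
      exact (hcone x ⟨hx, Metric.mem_ball_self hδ⟩).2
        ⟨⟨snocE w h, hc, rfl⟩, hball w h hw (by rw [abs_of_pos hh])⟩
    have hA_closed : IsClosed A :=
      isClosed_Icc.inter (isClosed_closure.preimage (hγcont w))
    have hA_ne : A.Nonempty :=
      ⟨-h, ⟨le_refl _, by linarith⟩, subset_closure hbot⟩
    have hA_bdd : BddAbove A := BddAbove.mono inter_subset_left bddAbove_Icc
    have hmem : f₀ w ∈ A := hA_closed.csSup_mem hA_ne hA_bdd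
    have ht₀ : f₀ w ∈ Icc (-h) h := hmem.1
    have hclosU : x + snocE w (f₀ w) ∈ closure U := hmem.2
    have ht₀h : f₀ w < h :=
      lt_of_le_of_ne ht₀.2 (fun he => htop (he ▸ hclosU))
    have habove' : ∀ t : ℝ, f₀ w < t → t ≤ h → x + snocE w t ∉ closure U := by
      intro t hlt hle hmem'
      exact absurd (le_csSup hA_bdd ⟨⟨by linarith [ht₀.1], hle⟩, hmem'⟩) (not_le.mpr hlt)
    have hfr : x + snocE w (f₀ w) ∈ frontier U := by
      rw [frontier_eq_closure_inter_closure]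
      refine ⟨hclosU, ?_⟩
      have htend : Filter.Tendsto (fun t : ℝ => x + snocE w t)
          (𝓝[>] (f₀ w)) (𝓝 (x + snocE w (f₀ w))) :=
        ((hγcont w).tendsto _).mono_left nhdsWithin_le_nhds
      refine mem_closure_of_tendsto htend ?_
      filter_upwards [Ioc_mem_nhdsGT_of_mem ⟨le_refl _, ht₀h⟩] with t ht
      exact fun hmem' => habove' t ht.1 ht.2 (subset_closure hmem')
    have hfrball : x + snocE w (f₀ w) ∈ frontier U ∩ Metric.ball x δ :=
      ⟨hfr, hball w (f₀ w) hw (abs_le.mpr ⟨ht₀.1, ht₀.2⟩)⟩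
    refine ⟨hfrball, ht₀, ?_, ?_⟩
    · intro t hlt hb
      have hc : snocE (0 : EuclideanSpace ℝ (Fin n)) (f₀ w - t) ∈ coneSet n K :=
        vertical_mem_coneSet hK (sub_pos.mpr hlt)
      refine (hcone _ hfrball).1 ⟨⟨snocE 0 (f₀ w - t), hc, ?_⟩, hb⟩
      show (x + snocE w (f₀ w)) - snocE 0 (f₀ w - t) = x + snocE w t
      rw [add_sub_assoc, snocE_sub, sub_zero, sub_sub_cancel]
    · intro t hlt hb
      have hc : snocE (0 : EuclideanSpace ℝ (Fin n)) (t - f₀ w) ∈ coneSet n K :=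
        vertical_mem_coneSet hK (sub_pos.mpr hlt)
      refine (hcone _ hfrball).2 ⟨⟨snocE 0 (t - f₀ w), hc, ?_⟩, hb⟩
      show (x + snocE w (f₀ w)) + snocE 0 (t - f₀ w) = x + snocE w t
      rw [add_assoc, snocE_add, add_zero, add_sub_cancel]
  -- value at the origin
  have h0r : ‖(0 : EuclideanSpace ℝ (Fin n))‖ < r := by simpa using hr
  have hx0 : x + snocE (0 : EuclideanSpace ℝ (Fin n)) 0 = x := by
    rw [snocE_zero, add_zero]
  have hxnotU : x ∉ U := by
    have hxf := hx
    rw [hU.frontier_eq] at hxf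
    exact hxf.2
  have hzero : f₀ 0 = 0 := by
    obtain ⟨hfr0, ht₀, hbelow, habove⟩ := key 0 h0r
    by_contra hne
    rcases lt_or_gt_of_ne hne with hlt | hgt
    · have hb : x + snocE (0 : EuclideanSpace ℝ (Fin n)) (0 : ℝ) ∈ Metric.ball x δ := by
        rw [hx0]; exact Metric.mem_ball_self hδ
      have hcl : x + snocE (0 : EuclideanSpace ℝ (Fin n)) (0 : ℝ) ∈ closure U := by
        rw [hx0]; exact frontier_subset_closure hx
      exact habove 0 hlt hb hcl
    · have hb : x + snocE (0 : EuclideanSpace ℝ (Fin n)) (0 : ℝ) ∈ Metric.ball x δ := by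
        rw [hx0]; exact Metric.mem_ball_self hδ
      have hmem := hbelow 0 hgt hb
      rw [hx0] at hmem
      exact hxnotU hmem
  -- Lipschitz on the ball
  have hlip : LipschitzOnWith (Real.toNNReal K) f₀ (Metric.ball 0 r) := by
    apply LipschitzOnWith.of_dist_le_mul
    intro w hw w' hw'
    rw [Metric.mem_ball, dist_zero_right] at hw hw'
    obtain ⟨hfr, _, _, _⟩ := key w hw
    obtain ⟨hfr', _, _, _⟩ := key w' hw'
    have hp : projE ((x + snocE w' (f₀ w')) - (x + snocE w (f₀ w))) = w' - w := by
      ext i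
      simp [PiLp.sub_apply, PiLp.add_apply]
    have hp' : projE ((x + snocE w (f₀ w)) - (x + snocE w' (f₀ w'))) = w - w' := by
      ext i
      simp [PiLp.sub_apply, PiLp.add_apply]
    have hl : ((x + snocE w (f₀ w)) : EuclideanSpace ℝ (Fin (n+1))) (Fin.last n)
        = x (Fin.last n) + f₀ w := by simp [PiLp.add_apply]
    have hl' : ((x + snocE w' (f₀ w')) : EuclideanSpace ℝ (Fin (n+1))) (Fin.last n)
        = x (Fin.last n) + f₀ w' := by simp [PiLp.add_apply]
    have h1 := hsep _ hfr _ hfr'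
    have h2 := hsep _ hfr' _ hfr
    rw [hp, hl, hl'] at h1
    rw [hp', hl, hl'] at h2
    rw [Real.dist_eq, dist_eq_norm, Real.coe_toNNReal _ hK.le]
    rw [abs_sub_le_iff]
    constructor
    · calc f₀ w - f₀ w' ≤ K * ‖w - w'‖ := by linarith
        _ = K * ‖w - w'‖ := rfl
    · calc f₀ w' - f₀ w ≤ K * ‖w' - w‖ := by linarith
        _ = K * ‖w - w'‖ := by rw [norm_sub_rev]
  obtain ⟨f, hf_lip, hf_eq⟩ := hlip.extend_real
  refine ⟨r, hr, Real.toNNReal K, f, hf_lip, ?_, ?_⟩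
  · rw [← hf_eq (Metric.mem_ball_self hr)]
    exact hzero
  · intro y hy
    set w : EuclideanSpace ℝ (Fin n) := projE (y - x) with hw_def
    set t : ℝ := y (Fin.last n) - x (Fin.last n) with ht_def
    have hyx_norm : ‖y - x‖ < r := by rwa [← dist_eq_norm]
    have hw : ‖w‖ < r := lt_of_le_of_lt (norm_projE_le _) hyx_norm
    have hyx : y = x + snocE w t := by
      have hrec := snocE_projE (y - x)
      rw [PiLp.sub_apply] at hrec
      rw [← ht_def, ← hw_def] at hrec
      rw [hrec, add_sub_cancel]
    have hfw : f w = f₀ w := (hf_eq (Metric.mem_ball.mpr (by rwa [dist_zero_right]))).symm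
    obtain ⟨hfr, ht₀, hbelow, habove⟩ := key w hw
    have hyball : y ∈ Metric.ball x δ :=
      Metric.mem_ball.mpr (lt_trans hy hrδ')
    rw [hfw]
    constructor
    · intro hyU
      by_contra hge
      push_neg at hge
      rcases eq_or_lt_of_le hge with heq | hlt
      · have hyfr : y ∈ frontier U := by
          rw [hyx, ← heq]
          exact hfr.1
        rw [hU.frontier_eq] at hyfr
        exact hyfr.2 hyU
      · exact habove t hlt (hyx ▸ hyball) (subset_closure (hyx ▸ hyU))
    · intro hlt
      have := hbelow t hlt (hyx ▸ hyball)
      rwa [← hyx] at this
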